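/- arXiv:2210.16286 — 2 statements merged into one kernel-verified Lean document; each statement's English description precedes it below -/
import Mathlib

section
/- Assume σ is bounded, σ' is bounded, and there are reals I_l < I_r and K > 0 with |σ'(u)| ≥ K for all u in the open interval I = (I_l, I_r). Let λ_min ≥ 0 be the smallest eigenvalue of G, let Θ_t = (A_t, U_t) be a mean-field flow for (G, μ₀), and assume the loss t ↦ L_t is differentiable. Then for every â > 0 and every t ≥ 0, −(d/dt) L_t ≥ (K² λ_min â² / (2n)) · (min_{1≤k≤n} μ_t(Ξ_k)) · L_t, where Ξ_k := {(a,u) ∈ ℝ × ℝⁿ : |a| ≥ â/2 and u_k ∈ I}. (This is the Polyak–Łojasiewicz-type inequality for the mean-field training dynamics, obtained from the positive definiteness of the time-varying kernel.) -/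
open MeasureTheory

noncomputable section

/-- A mean-field training flow for the partially-trained three-layer network,
projected onto the `n` training points.  `A t w` is the outer weight and
`U t w` the vector of pre-activations at time `t` of the neuron with initial
data `w = (a, u)`. -/
structure MFFlow (n : ℕ) (y : Fin n → ℝ) (σ : ℝ → ℝ) (βa : ℝ)
    (G : Matrix (Fin n) (Fin n) ℝ) (μ₀ : Measure (ℝ × (Fin n → ℝ))) where
  A : ℝ → ℝ × (Fin n → ℝ) → ℝ
  U : ℝ → ℝ × (Fin n → ℝ) → Fin n → ℝ
  initA : ∀ w, A 0 w = w.1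
  initU : ∀ w, U 0 w = w.2
  cont : Continuous (fun p : ℝ × (ℝ × (Fin n → ℝ)) => (A p.1 p.2, U p.1 p.2))
  integ : ∀ t, 0 ≤ t → ∀ k : Fin n,
    Integrable (fun w => A t w * σ (U t w k)) μ₀
  odeA : ∀ w, ∀ t, 0 ≤ t → HasDerivAt (fun s => A s w)
      (-(βa / n) * ∑ k : Fin n,
        ((∫ w', A t w' * σ (U t w' k) ∂μ₀) - y k) * σ (U t w k)) t
  odeU : ∀ w, ∀ t, 0 ≤ t → ∀ l : Fin n, HasDerivAt (fun s => U s w l)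
      (-(1 / n) * A t w * ∑ k : Fin n,
        ((∫ w', A t w' * σ (U t w' k) ∂μ₀) - y k) * deriv σ (U t w k) * G k l) t

namespace MFFlow

variable {n : ℕ} {y : Fin n → ℝ} {σ : ℝ → ℝ} {βa : ℝ}
  {G : Matrix (Fin n) (Fin n) ℝ} {μ₀ : Measure (ℝ × (Fin n → ℝ))}

/-- The model prediction `f_t^k` on the `k`-th training point. -/
def f (Φ : MFFlow n y σ βa G μ₀) (t : ℝ) (k : Fin n) : ℝ :=
  ∫ w, Φ.A t w * σ (Φ.U t w k) ∂μ₀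

/-- The training loss `L_t`. -/
def loss (Φ : MFFlow n y σ βa G μ₀) (t : ℝ) : ℝ :=
  (1 / (2 * n)) * ∑ k : Fin n, (Φ.f t k - y k) ^ 2

/-- The time-`t` mean-field measure `μ_t`, the pushforward of `μ₀` by `Θ_t`. -/
def μt (Φ : MFFlow n y σ βa G μ₀) (t : ℝ) : Measure (ℝ × (Fin n → ℝ)) :=
  μ₀.map (fun w => (Φ.A t w, Φ.U t w))

end MFFlow

/-- The standard Gaussian measure on `ℝⁿ`. -/
def stdGaussianPi (n : ℕ) : Measure (Fin n → ℝ) :=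
  Measure.pi fun _ => ProbabilityTheory.gaussianReal 0 1

open Classical in
/-- The positive semidefinite square root of a matrix (junk value `0` if the
matrix is not positive semidefinite). -/
def psdSqrt {n : ℕ} (M : Matrix (Fin n) (Fin n) ℝ) : Matrix (Fin n) (Fin n) ℝ :=
  if h : M.PosSemidef then
    (h.1.eigenvectorUnitary : Matrix (Fin n) (Fin n) ℝ) *
      Matrix.diagonal ((↑) ∘ (√·) ∘ h.1.eigenvalues) *
      (star h.1.eigenvectorUnitary : Matrix (Fin n) (Fin n) ℝ)
  else 0

/-- The centered Gaussian measure `N(0, M)` on `ℝⁿ`, i.e. the law of `M^{1/2} Z`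
for `Z` a standard Gaussian vector. -/
def gaussianOf {n : ℕ} (M : Matrix (Fin n) (Fin n) ℝ) : Measure (Fin n → ℝ) :=
  (stdGaussianPi n).map (fun z => (psdSqrt M).mulVec z)

end


open Matrix

lemma ortho_expand {n : ℕ} (w : Fin n → Fin n → ℝ)
    (horth : ∀ i j, (∑ k, w i k * w j k) = if i = j then (1:ℝ) else 0)
    (p q : Fin n → ℝ) :
    ∑ j, (∑ i, p i * w i j) * (∑ i, q i * w i j) = ∑ i, p i * q i := by
  have step : ∀ j, (∑ i, p i * w i j) * (∑ i, q i * w i j)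
      = ∑ i, ∑ i', (p i * q i') * (w i j * w i' j) := by
    intro j
    rw [Finset.sum_mul_sum]
    exact Finset.sum_congr rfl fun i _ => Finset.sum_congr rfl fun i' _ => by ring
  calc ∑ j, (∑ i, p i * w i j) * (∑ i, q i * w i j)
      = ∑ j, ∑ i, ∑ i', (p i * q i') * (w i j * w i' j) := by
        exact Finset.sum_congr rfl fun j _ => step j
    _ = ∑ i, ∑ i', ∑ j, (p i * q i') * (w i j * w i' j) := by
        rw [Finset.sum_comm]
        exact Finset.sum_congr rfl fun i _ => Finset.sum_comm
    _ = ∑ i, ∑ i', (p i * q i') * (if i = i' then (1:ℝ) else 0) := by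
        refine Finset.sum_congr rfl fun i _ => Finset.sum_congr rfl fun i' _ => ?_
        rw [← Finset.mul_sum, horth]
    _ = ∑ i, p i * q i := by
        refine Finset.sum_congr rfl fun i _ => ?_
        simp [Finset.mul_sum]
  
lemma quad_lower {n : ℕ} (G : Matrix (Fin n) (Fin n) ℝ) (hG : G.IsHermitian)
    (lmin : ℝ)
    (hmin : ∀ lam : ℝ, (∃ v : Fin n → ℝ, v ≠ 0 ∧ G.mulVec v = lam • v) → lmin ≤ lam)
    (v : Fin n → ℝ) :
    lmin * (v ⬝ᵥ v) ≤ v ⬝ᵥ G.mulVec v := by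
  classical
  set b := hG.eigenvectorBasis with hb
  set lam := hG.eigenvalues with hlam
  set w : Fin n → Fin n → ℝ := fun i => ⇑(b i) with hw
  have hGw : ∀ i, G.mulVec (w i) = lam i • w i := fun i => hG.mulVec_eigenvectorBasis i
  have hlam_ge : ∀ i, lmin ≤ lam i := by
    intro i
    refine hmin (lam i) ⟨w i, ?_, hGw i⟩
    intro h0
    have h1 : ‖b i‖ = 1 := b.orthonormal.1 i
    have h2 : (b i : EuclideanSpace ℝ (Fin n)) = 0 := PiLp.ext fun j => congrFun h0 j
    rw [h2] at h1; simp at h1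
  have horth : ∀ i j, (∑ k, w i k * w j k) = if i = j then (1:ℝ) else 0 := by
    intro i j
    have h := orthonormal_iff_ite.mp b.orthonormal i j
    simpa [PiLp.inner_apply, RCLike.inner_apply, w, mul_comm] using h
  set x : EuclideanSpace ℝ (Fin n) := (WithLp.equiv 2 _).symm v with hx
  set c : Fin n → ℝ := fun i => b.repr x i with hc
  have hsum : ∀ j, v j = ∑ i, c i * w i j := by
    intro j
    have h := b.sum_repr x
    calc v j = x j := rfl
      _ = (∑ i, b.repr x i • b i) j := by rw [h]
      _ = ∑ i, (b.repr x i • b i) j := (congrFun (WithLp.ofLp_sum _ _ _ _) j).trans (Finset.sum_apply _ _ _)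
      _ = ∑ i, c i * w i j := Finset.sum_congr rfl fun i _ => rfl
  have hmv : ∀ j, G.mulVec v j = ∑ i, (c i * lam i) * w i j := by
    intro j
    have hv : v = ∑ i, c i • w i := by
      funext j'; rw [hsum j']; simp [Finset.sum_apply]
    rw [hv, ← Matrix.mulVecLin_apply, map_sum]
    rw [Finset.sum_apply]
    refine Finset.sum_congr rfl fun i _ => ?_
    rw [_root_.map_smul, Matrix.mulVecLin_apply, hGw i]
    simp; ring
  have hdot1 : v ⬝ᵥ G.mulVec v = ∑ i, c i * (c i * lam i) := by
    unfold dotProduct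
    calc ∑ j, v j * G.mulVec v j
        = ∑ j, (∑ i, c i * w i j) * (∑ i, (c i * lam i) * w i j) := by
          exact Finset.sum_congr rfl fun j _ => by rw [hsum j, hmv j]
      _ = ∑ i, c i * (c i * lam i) := ortho_expand w horth _ _
  have hdot2 : v ⬝ᵥ v = ∑ i, c i * c i := by
    unfold dotProduct
    calc ∑ j, v j * v j
        = ∑ j, (∑ i, c i * w i j) * (∑ i, c i * w i j) := by
          exact Finset.sum_congr rfl fun j _ => by rw [hsum j]
      _ = ∑ i, c i * c i := ortho_expand w horth _ _
  rw [hdot1, hdot2, Finset.mul_sum]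
  refine Finset.sum_le_sum fun i _ => ?_
  have h1 : lmin * (c i * c i) ≤ lam i * (c i * c i) :=
    mul_le_mul_of_nonneg_right (hlam_ge i) (mul_self_nonneg _)
  nlinarith [h1]

open Matrix Filter Topology

set_option maxHeartbeats 2000000 in
/-- Polyak–Łojasiewicz inequality for the mean-field dynamics. -/
theorem pl_inequality
    (n : ℕ) (hn : 1 ≤ n) (y : Fin n → ℝ) (σ : ℝ → ℝ) (βa : ℝ) (hβa : 0 ≤ βa)
    (hσ_diff : Differentiable ℝ σ)
    (Mσ Lσ : ℝ)
    (hσ_bdd : ∀ u : ℝ, |σ u| ≤ Mσ)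
    (hσ'_bdd : ∀ u : ℝ, |deriv σ u| ≤ Lσ)
    (Il Ir K : ℝ) (hI : Il < Ir) (hK : 0 < K)
    (hσ'_low : ∀ u ∈ Set.Ioo Il Ir, K ≤ |deriv σ u|)
    (G : Matrix (Fin n) (Fin n) ℝ) (hGsymm : G.IsSymm) (hGpsd : G.PosSemidef)
    (lmin : ℝ) (hlmin_nonneg : 0 ≤ lmin)
    (hlmin_eig : ∃ v : Fin n → ℝ, v ≠ 0 ∧ G.mulVec v = lmin • v)
    (hlmin_min : ∀ lam : ℝ, (∃ v : Fin n → ℝ, v ≠ 0 ∧ G.mulVec v = lam • v) → lmin ≤ lam)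
    (μ₀ : Measure (ℝ × (Fin n → ℝ))) (hμ₀ : IsProbabilityMeasure μ₀)
    (hμ₀_cpt : ∃ Kc : Set ℝ, IsCompact Kc ∧ μ₀ {w | w.1 ∉ Kc} = 0)
    (Φ : MFFlow n y σ βa G μ₀)
    (hloss_diff : ∀ t, 0 ≤ t → DifferentiableAt ℝ Φ.loss t)
    (ahat : ℝ) (hahat : 0 < ahat) (t : ℝ) (ht : 0 ≤ t) :
    (K ^ 2 * lmin * ahat ^ 2 / (2 * n)) *
        (⨅ k : Fin n, (Φ.μt t {w : ℝ × (Fin n → ℝ) |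
            ahat / 2 ≤ |w.1| ∧ w.2 k ∈ Set.Ioo Il Ir}).toReal) * Φ.loss t
      ≤ -(deriv Φ.loss t) := by
  classical
  have hn0 : (0:ℝ) < n := by exact_mod_cast Nat.lt_of_lt_of_le Nat.zero_lt_one hn
  have hMσ0 : 0 ≤ Mσ := le_trans (abs_nonneg _) (hσ_bdd 0)
  have hLσ0 : 0 ≤ Lσ := le_trans (abs_nonneg _) (hσ'_bdd 0)
  have hσc : Continuous σ := hσ_diff.continuous
  -- abbreviations
  set ζ : ℝ → Fin n → ℝ := fun s k => Φ.f s k - y k with hζdef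
  set A' : ℝ → ℝ × (Fin n → ℝ) → ℝ := fun s w =>
    -(βa / n) * ∑ k, ζ s k * σ (Φ.U s w k) with hA'def
  set U' : ℝ → ℝ × (Fin n → ℝ) → Fin n → ℝ := fun s w l =>
    -(1 / n) * Φ.A s w * ∑ k, ζ s k * deriv σ (Φ.U s w k) * G k l with hU'def
  set F' : Fin n → ℝ → ℝ × (Fin n → ℝ) → ℝ := fun k s w =>
    A' s w * σ (Φ.U s w k) + Φ.A s w * (deriv σ (Φ.U s w k) * U' s w k) with hF'def
  -- ODEs in terms of the abbreviations
  have hodeA : ∀ w, ∀ s, 0 ≤ s → HasDerivAt (fun r => Φ.A r w) (A' s w) s := by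
    intro w s hs; exact Φ.odeA w s hs
  have hodeU : ∀ w, ∀ s, 0 ≤ s → ∀ l, HasDerivAt (fun r => Φ.U r w l) (U' s w l) s := by
    intro w s hs l; exact Φ.odeU w s hs l
  have hasF : ∀ (k : Fin n) (w : ℝ × (Fin n → ℝ)) (s : ℝ), 0 ≤ s →
      HasDerivAt (fun r => Φ.A r w * σ (Φ.U r w k)) (F' k s w) s := by
    intro k w s hs
    have h3 : HasDerivAt (fun r => σ (Φ.U r w k)) (deriv σ (Φ.U s w k) * U' s w k) s :=
      HasDerivAt.comp s (hσ_diff (Φ.U s w k)).hasDerivAt (hodeU w s hs k)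
    exact (hodeA w s hs).mul h3
  -- continuity facts
  have hcontA : ∀ s, Continuous (fun w => Φ.A s w) := fun s =>
    (continuous_fst.comp Φ.cont).comp (Continuous.prodMk_right s)
  have hcontU : ∀ s k, Continuous (fun w => Φ.U s w k) := fun s k =>
    ((continuous_apply k).comp (continuous_snd.comp Φ.cont)).comp (Continuous.prodMk_right s)
  have hmeasσ' : ∀ s k, Measurable (fun w => deriv σ (Φ.U s w k)) := fun s k =>
    (measurable_deriv σ).comp (hcontU s k).measurable
  have hmeasF' : ∀ k s, AEStronglyMeasurable (fun w => F' k s w) μ₀ := by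
    intro k s
    have h1 : Measurable (fun w => A' s w) := by
      apply Measurable.const_mul
      exact Finset.measurable_sum _ fun j _ =>
        ((hσc.comp (hcontU s j)).measurable).const_mul _
    have h2 : Measurable (fun w => U' s w k) := by
      apply Measurable.mul
      · exact ((hcontA s).measurable).const_mul _
      · exact Finset.measurable_sum _ fun j _ =>
          (((hmeasσ' s j).const_mul _).mul_const _)
    exact ((h1.mul (hσc.comp (hcontU s k)).measurable).add
      ((hcontA s).measurable.mul ((hmeasσ' s k).mul h2))).aestronglyMeasurable
  -- compact support of the first marginal
  obtain ⟨Kc, hKc_cpt, hKc0⟩ := hμ₀_cpt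
  obtain ⟨R, hR0, hRKc⟩ : ∃ R : ℝ, 0 ≤ R ∧ ∀ x ∈ Kc, |x| ≤ R := by
    obtain ⟨r, hr⟩ := hKc_cpt.isBounded.subset_closedBall 0
    refine ⟨max r 0, le_max_right _ _, fun x hx => ?_⟩
    have := hr hx
    rw [Metric.mem_closedBall, Real.dist_eq, sub_zero] at this
    exact le_trans this (le_max_left _ _)
  have hae : ∀ᵐ w ∂μ₀, |w.1| ≤ R := by
    rw [MeasureTheory.ae_iff]
    refine MeasureTheory.measure_mono_null ?_ hKc0
    intro w hw
    simp only [Set.mem_setOf_eq] at hw ⊢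
    intro hmem; exact hw (hRKc _ hmem)
  -- bound on the loss on [0, T]
  set T : ℝ := t + 1 with hTdef
  have htT : t < T := by simp [hTdef]
  have hT0 : (0:ℝ) ≤ T := le_trans ht htT.le
  have hlossCont : ContinuousOn Φ.loss (Set.Icc 0 T) := fun s hs =>
    ((hloss_diff s hs.1).continuousAt).continuousWithinAt
  obtain ⟨CL, hCL⟩ := isCompact_Icc.exists_bound_of_continuousOn hlossCont
  -- bound on ζ on [0, T]
  set Z : ℝ := Real.sqrt (2 * n * CL) with hZdef
  have hZ0 : 0 ≤ Z := Real.sqrt_nonneg _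
  have hsumsq : ∀ s, ∑ k, (ζ s k) ^ 2 = 2 * n * Φ.loss s := by
    intro s
    have : Φ.loss s = (1 / (2 * n)) * ∑ k, (ζ s k) ^ 2 := rfl
    rw [this]
    field_simp
  have hζbdd : ∀ s ∈ Set.Icc (0:ℝ) T, ∀ k, |ζ s k| ≤ Z := by
    intro s hs k
    have h1 : (ζ s k) ^ 2 ≤ ∑ j, (ζ s j) ^ 2 :=
      Finset.single_le_sum (f := fun j => (ζ s j) ^ 2) (fun j _ => sq_nonneg _)
        (Finset.mem_univ k)
    have h2 : (ζ s k) ^ 2 ≤ 2 * n * CL := by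
      rw [hsumsq s] at h1
      have := hCL s hs
      have h3 : Φ.loss s ≤ CL := le_trans (le_abs_self _) this
      nlinarith
    calc |ζ s k| = Real.sqrt ((ζ s k) ^ 2) := (Real.sqrt_sq_eq_abs _).symm
      _ ≤ Z := Real.sqrt_le_sqrt h2
  -- bound on A' on [0, T]
  set CA' : ℝ := βa * Z * Mσ with hCA'def
  have hCA'0 : 0 ≤ CA' := by positivity
  have hA'bdd : ∀ s ∈ Set.Icc (0:ℝ) T, ∀ w, |A' s w| ≤ CA' := by
    intro s hs w
    have h1 : |∑ k, ζ s k * σ (Φ.U s w k)| ≤ ∑ k : Fin n, Z * Mσ := by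
      refine le_trans (Finset.abs_sum_le_sum_abs _ _) (Finset.sum_le_sum fun k _ => ?_)
      rw [abs_mul]
      exact mul_le_mul (hζbdd s hs k) (hσ_bdd _) (abs_nonneg _) hZ0
    have h2 : |A' s w| ≤ (βa / n) * (n * (Z * Mσ)) := by
      rw [hA'def]
      simp only []
      rw [abs_mul, abs_neg, abs_of_nonneg (by positivity : (0:ℝ) ≤ βa / n)]
      refine mul_le_mul_of_nonneg_left ?_ (by positivity)
      simpa [Finset.sum_const, Finset.card_univ, mul_assoc] using h1
    calc |A' s w| ≤ (βa / n) * (n * (Z * Mσ)) := h2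
      _ = CA' := by field_simp [hCA'def]; ring
  -- bound on A on [0, T]
  set CA : ℝ := R + CA' * T with hCAdef
  have hCA0 : 0 ≤ CA := by positivity
  have hAbdd : ∀ᵐ w ∂μ₀, ∀ s ∈ Set.Icc (0:ℝ) T, |Φ.A s w| ≤ CA := by
    filter_upwards [hae] with w hw
    intro s hs
    have hmvt : ‖Φ.A s w - Φ.A 0 w‖ ≤ CA' * ‖s - 0‖ := by
      refine Convex.norm_image_sub_le_of_norm_hasDerivWithin_le
        (f' := fun x => A' x w) (fun x hx => (hodeA w x hx.1).hasDerivWithinAt)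
        (fun x hx => by simpa using hA'bdd x hx w) (convex_Icc 0 T)
        (Set.left_mem_Icc.mpr hT0) hs
    rw [Real.norm_eq_abs, Real.norm_eq_abs, sub_zero] at hmvt
    have h0 : Φ.A 0 w = w.1 := Φ.initA w
    have h1 : |Φ.A s w| ≤ |Φ.A 0 w| + CA' * |s| := by
      have := abs_sub_abs_le_abs_sub (Φ.A s w) (Φ.A 0 w)
      linarith
    have h2 : |s| ≤ T := abs_le.mpr ⟨by linarith [hs.1], hs.2⟩
    have h3 : CA' * |s| ≤ CA' * T := mul_le_mul_of_nonneg_left h2 hCA'0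
    rw [h0] at h1
    calc |Φ.A s w| ≤ |w.1| + CA' * |s| := h1
      _ ≤ R + CA' * T := add_le_add hw h3
  -- entrywise bound on G
  set CG : ℝ := ∑ i, ∑ j, |G i j| with hCGdef
  have hCG0 : 0 ≤ CG := Finset.sum_nonneg fun i _ => Finset.sum_nonneg fun j _ => abs_nonneg _
  have hCGentry : ∀ i j, |G i j| ≤ CG := by
    intro i j
    calc |G i j| ≤ ∑ j', |G i j'| :=
          Finset.single_le_sum (f := fun j' => |G i j'|) (fun j' _ => abs_nonneg _)
            (Finset.mem_univ j)
      _ ≤ CG := Finset.single_le_sum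
          (f := fun i' => ∑ j', |G i' j'|)
          (fun i' _ => Finset.sum_nonneg fun j' _ => abs_nonneg _) (Finset.mem_univ i)
  -- bound on U' and F' on [0, T]
  set CU' : ℝ := CA * (Z * Lσ * CG) with hCU'def
  set CB : ℝ := CA' * Mσ + CA * (Lσ * CU') with hCBdef
  have hCB0 : 0 ≤ CB := by positivity
  have hF'bdd : ∀ᵐ w ∂μ₀, ∀ s ∈ Set.Icc (0:ℝ) T, ∀ k, |F' k s w| ≤ CB := by
    filter_upwards [hAbdd] with w hA
    intro s hs k
    have hU' : ∀ l, |U' s w l| ≤ CU' := by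
      intro l
      have h1 : |∑ j, ζ s j * deriv σ (Φ.U s w j) * G j l| ≤ ∑ j : Fin n, Z * Lσ * CG := by
        refine le_trans (Finset.abs_sum_le_sum_abs _ _) (Finset.sum_le_sum fun j _ => ?_)
        rw [abs_mul, abs_mul]
        refine mul_le_mul (mul_le_mul (hζbdd s hs j) (hσ'_bdd _) (abs_nonneg _) hZ0)
          (hCGentry j l) (abs_nonneg _) (by positivity)
      have h2 : |U' s w l| ≤ (1 / n) * |Φ.A s w| * (n * (Z * Lσ * CG)) := by
        rw [hU'def]
        simp only []
        rw [abs_mul, abs_mul, abs_neg, abs_of_nonneg (by positivity : (0:ℝ) ≤ 1 / (n:ℝ))]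
        refine mul_le_mul_of_nonneg_left ?_ (by positivity)
        simpa [Finset.sum_const, Finset.card_univ, mul_assoc] using h1
      calc |U' s w l| ≤ (1 / n) * |Φ.A s w| * (n * (Z * Lσ * CG)) := h2
        _ = |Φ.A s w| * (Z * Lσ * CG) := by field_simp
        _ ≤ CA * (Z * Lσ * CG) := by
            refine mul_le_mul_of_nonneg_right (hA s hs) (by positivity)
    have e1 : |A' s w * σ (Φ.U s w k)| = |A' s w| * |σ (Φ.U s w k)| := abs_mul _ _
    have e2 : |Φ.A s w * (deriv σ (Φ.U s w k) * U' s w k)| =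
        |Φ.A s w| * (|deriv σ (Φ.U s w k)| * |U' s w k|) := by rw [abs_mul, abs_mul]
    have h3 : |F' k s w| ≤ |A' s w| * |σ (Φ.U s w k)| +
        |Φ.A s w| * (|deriv σ (Φ.U s w k)| * |U' s w k|) := by
      rw [hF'def]
      exact le_trans (abs_add_le _ _) (by rw [e1, e2])
    refine le_trans h3 ?_
    have hb1 : |A' s w| * |σ (Φ.U s w k)| ≤ CA' * Mσ :=
      mul_le_mul (hA'bdd s hs w) (hσ_bdd _) (abs_nonneg _) hCA'0
    have hb2 : |Φ.A s w| * (|deriv σ (Φ.U s w k)| * |U' s w k|) ≤ CA * (Lσ * CU') := by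
      refine mul_le_mul (hA s hs) ?_ (by positivity) hCA0
      exact mul_le_mul (hσ'_bdd _) (hU' k) (abs_nonneg _) hLσ0
    rw [hCBdef]
    exact add_le_add hb1 hb2
  -- integrability of F' at time t
  have htmem : t ∈ Set.Icc (0:ℝ) T := ⟨ht, htT.le⟩
  have hIntF' : ∀ k, MeasureTheory.Integrable (fun w => F' k t w) μ₀ := by
    intro k
    refine (MeasureTheory.integrable_const CB).mono' (hmeasF' k t) ?_
    filter_upwards [hF'bdd] with w hw
    simpa using hw t htmem k
  -- the key derivative computation
  set D : Fin n → ℝ := fun k => ∫ w, F' k t w ∂μ₀ with hDdef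
  have hDk : ∀ k, HasDerivWithinAt (fun s => Φ.f s k) (D k) (Set.Ici t) t := by
    intro k
    rw [hasDerivWithinAt_iff_tendsto_slope]
    have hev : ∀ᶠ s in 𝓝[Set.Ici t \ {t}] t, s ∈ Set.Icc t T ∧ s ∈ Set.Ici t \ {t} := by
      have h1 : ∀ᶠ s in 𝓝[Set.Ici t \ {t}] t, s < T :=
        eventually_nhdsWithin_of_eventually_nhds (Filter.Tendsto.eventually_lt_const htT tendsto_id)
      have h2 : ∀ᶠ s in 𝓝[Set.Ici t \ {t}] t, s ∈ Set.Ici t \ {t} :=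
        eventually_mem_nhdsWithin
      filter_upwards [h1, h2] with s hs1 hs2
      exact ⟨⟨hs2.1, hs1.le⟩, hs2⟩
    have hmain : Tendsto (fun s => ∫ w, slope (fun r => Φ.A r w * σ (Φ.U r w k)) t s ∂μ₀)
        (𝓝[Set.Ici t \ {t}] t) (𝓝 (D k)) := by
      refine MeasureTheory.tendsto_integral_filter_of_dominated_convergence
        (fun _ => CB) ?_ ?_ (MeasureTheory.integrable_const CB) ?_
      · filter_upwards [hev] with s hs
        have : (fun w => slope (fun r => Φ.A r w * σ (Φ.U r w k)) t s) =
            fun w => (Φ.A s w * σ (Φ.U s w k) - Φ.A t w * σ (Φ.U t w k)) / (s - t) := by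
          funext w; rw [slope_def_field]
        rw [this]
        exact (((hcontA s).mul (hσc.comp (hcontU s k))).sub
          ((hcontA t).mul (hσc.comp (hcontU t k)))).div_const (s - t) |>.aestronglyMeasurable
      · filter_upwards [hev] with s hs
        filter_upwards [hF'bdd] with w hw
        have hst : t ≠ s := fun h => hs.2.2 (by simp [← h])
        have hmvt : ‖(Φ.A s w * σ (Φ.U s w k)) - (Φ.A t w * σ (Φ.U t w k))‖ ≤ CB * ‖s - t‖ := by
          refine Convex.norm_image_sub_le_of_norm_hasDerivWithin_le
            (f' := fun x => F' k x w)
            (fun x hx => (hasF k w x (le_trans ht hx.1)).hasDerivWithinAt)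
            (fun x hx => by
              simpa using hw x ⟨le_trans ht hx.1, le_trans hx.2 hs.1.2⟩ k)
            (convex_Icc t s) (Set.left_mem_Icc.mpr hs.2.1) (Set.right_mem_Icc.mpr hs.2.1)
        rw [slope_def_field, Real.norm_eq_abs, abs_div]
        rw [Real.norm_eq_abs, Real.norm_eq_abs] at hmvt
        have habs : |s - t| > 0 := abs_pos.mpr (sub_ne_zero.mpr (Ne.symm hst))
        rw [div_le_iff₀ habs]
        exact hmvt
      · refine MeasureTheory.ae_of_all _ fun w => ?_
        have := (hasF k w t ht).hasDerivWithinAt (s := Set.Ici t)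
        exact hasDerivWithinAt_iff_tendsto_slope.mp this
    refine hmain.congr' ?_
    filter_upwards [eventually_mem_nhdsWithin] with s hs
    have hs0 : (0:ℝ) ≤ s := le_trans ht hs.1
    rw [slope_def_field]
    have : (fun w => slope (fun r => Φ.A r w * σ (Φ.U r w k)) t s) =
        fun w => (Φ.A s w * σ (Φ.U s w k) - Φ.A t w * σ (Φ.U t w k)) / (s - t) := by
      funext w; rw [slope_def_field]
    rw [this, MeasureTheory.integral_div,
      MeasureTheory.integral_sub (Φ.integ s hs0 k) (Φ.integ t ht k)]
    rfl
  -- derivative of the loss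
  have hL1 : HasDerivWithinAt Φ.loss ((1 / (2 * (n:ℝ))) * ∑ k, (2 * ζ t k * D k))
      (Set.Ici t) t := by
    have h2 : ∀ k ∈ Finset.univ, HasDerivWithinAt (fun s => (Φ.f s k - y k) ^ 2)
        (2 * ζ t k * D k) (Set.Ici t) t := by
      intro k _
      have h3 := ((hDk k).sub_const (y k)).pow 2
      norm_num at h3
      exact h3
    have h4 := HasDerivWithinAt.sum h2
    have h5 := h4.const_mul (1 / (2 * (n:ℝ)))
    have : Φ.loss = fun s => (1 / (2 * (n:ℝ))) * ∑ k, (Φ.f s k - y k) ^ 2 := rfl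
    rw [this]
    rw [show (∑ i : Fin n, fun s => (Φ.f s i - y i) ^ 2) = fun s => ∑ i, (Φ.f s i - y i) ^ 2
      from by funext s; exact Finset.sum_apply _ _ _] at h5
    exact h5
  have hderiv : deriv Φ.loss t = (1 / (2 * (n:ℝ))) * ∑ k, (2 * ζ t k * D k) := by
    have hu : UniqueDiffWithinAt ℝ (Set.Ici t) t := uniqueDiffOn_Ici t t Set.self_mem_Ici
    have e1 := ((hloss_diff t ht).hasDerivAt.hasDerivWithinAt (s := Set.Ici t)).derivWithin hu
    have e2 := hL1.derivWithin hu
    rw [← e1, e2]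
  -- rewrite the derivative as an integral
  set S : ℝ × (Fin n → ℝ) → ℝ := fun w => ∑ k, ζ t k * σ (Φ.U t w k) with hSdef
  set v : ℝ × (Fin n → ℝ) → Fin n → ℝ := fun w i => ζ t i * deriv σ (Φ.U t w i) with hvdef
  set hfun : ℝ × (Fin n → ℝ) → ℝ := fun w =>
    (βa / n) * (S w) ^ 2 + (1 / n) * (Φ.A t w) ^ 2 * (v w ⬝ᵥ G.mulVec (v w)) with hhdef
  have hGc : ∀ i j, G i j = G j i := fun i j => by
    conv_lhs => rw [← hGsymm]
    rfl
  have hpt : ∀ w, ∑ k, ζ t k * F' k t w = -(hfun w) := by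
    intro w
    have hterm : ∀ k, ζ t k * F' k t w =
        (-(βa / n) * S w) * (ζ t k * σ (Φ.U t w k)) +
        (-(1 / n) * (Φ.A t w) ^ 2) * (v w k * ∑ j, v w j * G j k) := by
      intro k
      have hA'eq : A' t w = -(βa / n) * S w := rfl
      have hU'eq : U' t w k = -(1 / n) * Φ.A t w * ∑ j, v w j * G j k := by
        rw [hU'def, hvdef]
      rw [hF'def]
      simp only [hA'eq, hU'eq, hvdef]
      ring
    calc ∑ k, ζ t k * F' k t w
        = (-(βa / n) * S w) * ∑ k, (ζ t k * σ (Φ.U t w k)) +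
          (-(1 / n) * (Φ.A t w) ^ 2) * ∑ k, (v w k * ∑ j, v w j * G j k) := by
          rw [Finset.sum_congr rfl fun k _ => hterm k, Finset.sum_add_distrib,
            ← Finset.mul_sum, ← Finset.mul_sum]
      _ = -(hfun w) := by
          have hdot : v w ⬝ᵥ G.mulVec (v w) = ∑ k, (v w k * ∑ j, v w j * G j k) := by
            unfold dotProduct Matrix.mulVec
            refine Finset.sum_congr rfl fun k _ => ?_
            congr 1
            refine Finset.sum_congr rfl fun j _ => ?_
            simp only []
            rw [hGc k j]; ring
          rw [hhdef]
          simp only []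
          rw [hdot]
          ring
  have hsum_eq : ∑ k, ζ t k * D k = ∫ w, ∑ k, ζ t k * F' k t w ∂μ₀ := by
    rw [MeasureTheory.integral_finset_sum _ fun k _ => (hIntF' k).const_mul (ζ t k)]
    exact Finset.sum_congr rfl fun k _ => (MeasureTheory.integral_const_mul _ _).symm
  have hInt_sum : MeasureTheory.Integrable (fun w => ∑ k, ζ t k * F' k t w) μ₀ :=
    MeasureTheory.integrable_finset_sum _ fun k _ => (hIntF' k).const_mul (ζ t k)
  have hInt_h : MeasureTheory.Integrable hfun μ₀ := by
    have := hInt_sum.neg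
    refine this.congr (MeasureTheory.ae_of_all _ fun w => ?_)
    rw [Pi.neg_apply, hpt w, neg_neg]
  have hderiv_int : -(deriv Φ.loss t) = (1 / n) * ∫ w, hfun w ∂μ₀ := by
    rw [hderiv]
    have h6 : (1 / (2 * (n:ℝ))) * ∑ k, (2 * ζ t k * D k) = (1 / n) * ∑ k, ζ t k * D k := by
      rw [Finset.mul_sum, Finset.mul_sum]
      refine Finset.sum_congr rfl fun k _ => ?_
      field_simp
    rw [h6, hsum_eq]
    rw [MeasureTheory.integral_congr_ae (MeasureTheory.ae_of_all _ hpt)]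
    rw [MeasureTheory.integral_neg]
    ring
  -- lower bound on the integrand
  set q : Fin n → ℝ × (Fin n → ℝ) → ℝ := fun i w =>
    (Φ.A t w) ^ 2 * (deriv σ (Φ.U t w i)) ^ 2 with hqdef
  set g : ℝ × (Fin n → ℝ) → ℝ := fun w =>
    (lmin / n) * ∑ i, (ζ t i) ^ 2 * q i w with hgdef
  have hg_le_h : ∀ w, g w ≤ hfun w := by
    intro w
    have hquad := quad_lower G hGpsd.1 lmin hlmin_min (v w)
    have hvv : v w ⬝ᵥ v w = ∑ i, (ζ t i) ^ 2 * (deriv σ (Φ.U t w i)) ^ 2 := by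
      unfold dotProduct
      refine Finset.sum_congr rfl fun i _ => ?_
      simp only [hvdef]; ring
    have h1 : (1 / (n:ℝ)) * (Φ.A t w) ^ 2 * (lmin * (v w ⬝ᵥ v w)) ≤
        (1 / n) * (Φ.A t w) ^ 2 * (v w ⬝ᵥ G.mulVec (v w)) :=
      mul_le_mul_of_nonneg_left hquad (by positivity)
    have h2 : g w = (1 / (n:ℝ)) * (Φ.A t w) ^ 2 * (lmin * (v w ⬝ᵥ v w)) := by
      rw [hvv]
      simp only [hgdef, hqdef, Finset.mul_sum]
      exact Finset.sum_congr rfl fun i _ => by ring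
    have h3 : (0:ℝ) ≤ (βa / n) * (S w) ^ 2 := by positivity
    rw [h2, hhdef]
    simp only []
    linarith
  have hq_int : ∀ i, MeasureTheory.Integrable (q i) μ₀ := by
    intro i
    refine (MeasureTheory.integrable_const (CA ^ 2 * Lσ ^ 2)).mono'
      (((hcontA t).measurable.pow_const 2).mul ((hmeasσ' t i).pow_const 2)).aestronglyMeasurable ?_
    filter_upwards [hAbdd] with w hw
    have h1 : |Φ.A t w| ≤ CA := hw t htmem
    have h2 : |deriv σ (Φ.U t w i)| ≤ Lσ := hσ'_bdd _
    rw [Real.norm_eq_abs, hqdef]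
    simp only []
    rw [abs_mul, abs_pow, abs_pow]
    exact mul_le_mul (pow_le_pow_left₀ (abs_nonneg _) h1 2)
      (pow_le_pow_left₀ (abs_nonneg _) h2 2) (by positivity) (by positivity)
  have hg_int : MeasureTheory.Integrable g μ₀ := by
    refine MeasureTheory.Integrable.const_mul ?_ _
    exact MeasureTheory.integrable_finset_sum _ fun i _ => (hq_int i).const_mul _
  -- the set bound
  set m : ℝ := ⨅ k : Fin n, (Φ.μt t {w : ℝ × (Fin n → ℝ) |
      ahat / 2 ≤ |w.1| ∧ w.2 k ∈ Set.Ioo Il Ir}).toReal with hmdef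
  haveI : Nonempty (Fin n) := ⟨⟨0, Nat.lt_of_lt_of_le Nat.zero_lt_one hn⟩⟩
  have hm0 : 0 ≤ m := by
    refine le_ciInf fun k => ENNReal.toReal_nonneg
  have hbdd : BddBelow (Set.range fun k : Fin n => (Φ.μt t {w : ℝ × (Fin n → ℝ) |
      ahat / 2 ≤ |w.1| ∧ w.2 k ∈ Set.Ioo Il Ir}).toReal) := by
    refine ⟨0, ?_⟩
    rintro x ⟨k, rfl⟩
    exact ENNReal.toReal_nonneg
  set E : Fin n → Set (ℝ × (Fin n → ℝ)) := fun i =>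
    {w | ahat / 2 ≤ |Φ.A t w| ∧ Φ.U t w i ∈ Set.Ioo Il Ir} with hEdef
  have hE_meas : ∀ i, MeasurableSet (E i) := by
    intro i
    refine MeasurableSet.inter ?_ ?_
    · exact measurableSet_le measurable_const ((hcontA t).abs.measurable)
    · exact (hcontU t i).measurable measurableSet_Ioo
  have hμtE : ∀ i, (Φ.μt t {w : ℝ × (Fin n → ℝ) |
      ahat / 2 ≤ |w.1| ∧ w.2 i ∈ Set.Ioo Il Ir}) = μ₀ (E i) := by
    intro i
    have hmeas_map : Measurable (fun w => (Φ.A t w, Φ.U t w)) :=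
      (Φ.cont.comp (Continuous.prodMk_right t)).measurable
    have hset : MeasurableSet {p : ℝ × (Fin n → ℝ) |
        ahat / 2 ≤ |p.1| ∧ p.2 i ∈ Set.Ioo Il Ir} := by
      refine MeasurableSet.inter ?_ ?_
      · exact measurableSet_le measurable_const (continuous_fst.abs.measurable)
      · exact ((continuous_apply i).comp continuous_snd).measurable measurableSet_Ioo
    rw [MFFlow.μt, MeasureTheory.Measure.map_apply hmeas_map hset]
    rfl
  have hq_lower : ∀ i, (ahat / 2) ^ 2 * K ^ 2 * m ≤ ∫ w, q i w ∂μ₀ := by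
    intro i
    have hq_nonneg : ∀ w, 0 ≤ q i w := fun w => by positivity
    have step1 : ∫ w in E i, q i w ∂μ₀ ≤ ∫ w, q i w ∂μ₀ :=
      MeasureTheory.setIntegral_le_integral (hq_int i)
        (MeasureTheory.ae_of_all _ hq_nonneg)
    have step2 : ∫ w in E i, ((ahat / 2) ^ 2 * K ^ 2) ∂μ₀ ≤ ∫ w in E i, q i w ∂μ₀ := by
      refine MeasureTheory.setIntegral_mono_on
        (MeasureTheory.integrable_const _).integrableOn
        (hq_int i).integrableOn (hE_meas i) ?_
      intro w hw
      obtain ⟨hw1, hw2⟩ := hw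
      have h1 : (ahat / 2) ^ 2 ≤ (Φ.A t w) ^ 2 := by
        rw [← sq_abs (Φ.A t w)]
        exact pow_le_pow_left₀ (by positivity) hw1 2
      have h2 : K ^ 2 ≤ (deriv σ (Φ.U t w i)) ^ 2 := by
        rw [← sq_abs (deriv σ (Φ.U t w i))]
        exact pow_le_pow_left₀ hK.le (hσ'_low _ hw2) 2
      exact mul_le_mul h1 h2 (by positivity) (sq_nonneg _)
    have step3 : ∫ w in E i, ((ahat / 2) ^ 2 * K ^ 2) ∂μ₀ =
        (μ₀ (E i)).toReal * ((ahat / 2) ^ 2 * K ^ 2) := by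
      rw [MeasureTheory.setIntegral_const]
      simp [smul_eq_mul]
      exact Or.inl rfl
    have step4 : m ≤ (μ₀ (E i)).toReal := by
      rw [← hμtE i]
      exact ciInf_le hbdd i
    calc (ahat / 2) ^ 2 * K ^ 2 * m
        ≤ (ahat / 2) ^ 2 * K ^ 2 * (μ₀ (E i)).toReal := by
          exact mul_le_mul_of_nonneg_left step4 (by positivity)
      _ = ∫ w in E i, ((ahat / 2) ^ 2 * K ^ 2) ∂μ₀ := by rw [step3]; ring
      _ ≤ ∫ w, q i w ∂μ₀ := le_trans step2 step1
  -- put everything together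
  have hint_g : ∫ w, g w ∂μ₀ = (lmin / n) * ∑ i, (ζ t i) ^ 2 * ∫ w, q i w ∂μ₀ := by
    rw [hgdef]
    rw [MeasureTheory.integral_const_mul]
    congr 1
    rw [MeasureTheory.integral_finset_sum _ fun i _ => (hq_int i).const_mul _]
    exact Finset.sum_congr rfl fun i _ => MeasureTheory.integral_const_mul _ _
  have hmono : ∫ w, g w ∂μ₀ ≤ ∫ w, hfun w ∂μ₀ :=
    MeasureTheory.integral_mono hg_int hInt_h hg_le_h
  have hfinal1 : (lmin / n) * ∑ i, (ζ t i) ^ 2 * ((ahat / 2) ^ 2 * K ^ 2 * m) ≤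
      ∫ w, g w ∂μ₀ := by
    rw [hint_g]
    refine mul_le_mul_of_nonneg_left ?_ (by positivity)
    refine Finset.sum_le_sum fun i _ => ?_
    exact mul_le_mul_of_nonneg_left (hq_lower i) (sq_nonneg _)
  have hsum2 : ∑ i, (ζ t i) ^ 2 * ((ahat / 2) ^ 2 * K ^ 2 * m) =
      (2 * n * Φ.loss t) * ((ahat / 2) ^ 2 * K ^ 2 * m) := by
    rw [← Finset.sum_mul, hsumsq]
  rw [hderiv_int]
  have hloss_nonneg : 0 ≤ Φ.loss t := by
    have : Φ.loss t = (1 / (2 * (n:ℝ))) * ∑ k, (ζ t k) ^ 2 := rfl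
    rw [this]
    positivity
  have hchain : (lmin / n) * ((2 * n * Φ.loss t) * ((ahat / 2) ^ 2 * K ^ 2 * m)) ≤
      ∫ w, hfun w ∂μ₀ := by
    calc (lmin / n) * ((2 * n * Φ.loss t) * ((ahat / 2) ^ 2 * K ^ 2 * m))
        = (lmin / n) * ∑ i, (ζ t i) ^ 2 * ((ahat / 2) ^ 2 * K ^ 2 * m) := by rw [hsum2]
      _ ≤ ∫ w, g w ∂μ₀ := hfinal1
      _ ≤ ∫ w, hfun w ∂μ₀ := hmono
  have hgoal : (K ^ 2 * lmin * ahat ^ 2 / (2 * n)) * m * Φ.loss t =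
      (1 / n) * ((lmin / n) * ((2 * n * Φ.loss t) * ((ahat / 2) ^ 2 * K ^ 2 * m))) := by
    field_simp
  rw [hmdef] at hgoal
  rw [hgoal]
  exact mul_le_mul_of_nonneg_left hchain (by positivity)
end

section
/- Let n ≥ 1, let G and G̃ be real symmetric n×n matrices, and let η > 0 be such that |λ − λ'| ≥ η for every pair of distinct eigenvalues λ ≠ λ' of G. If ‖G̃ − G‖ ≤ η/2, then there exist orthonormal bases (v̄₁,…,v̄ₙ) and (v₁,…,vₙ) of ℝⁿ and real numbers (λ̄₁,…,λ̄ₙ) and (λ₁,…,λₙ) such that G v̄ₖ = λ̄ₖ v̄ₖ and G̃ vₖ = λₖ vₖ for every k ∈ {1,…,n}, and moreover ⟨v̄ₖ, vₖ⟩ ≥ 1 − (2‖G̃ − G‖/η)² for every k ∈ {1,…,n}. -/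
set_option linter.unusedSectionVars false
set_option maxHeartbeats 1000000

open MeasureTheory

noncomputable section

/-- The operator (spectral) norm of a square real matrix, with respect to the
Euclidean norm. -/
def matOpNorm {n : ℕ} (M : Matrix (Fin n) (Fin n) ℝ) : ℝ :=
  ‖(Matrix.toEuclideanCLM (𝕜 := ℝ) M :
      EuclideanSpace ℝ (Fin n) →L[ℝ] EuclideanSpace ℝ (Fin n))‖

namespace DKAux

open Matrix

variable {n : Type*} [Fintype n] [DecidableEq n]

lemma ct_eq_t (M : Matrix n n ℝ) : Mᴴ = Mᵀ := by
  ext i j; simp [Matrix.conjTranspose_apply]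

lemma psd_of (M : Matrix n n ℝ) (h1 : Mᵀ = M) (h2 : ∀ x, 0 ≤ x ⬝ᵥ M *ᵥ x) :
    M.PosSemidef := by
  refine PosSemidef.of_dotProduct_mulVec_nonneg (by rw [Matrix.IsHermitian, ct_eq_t, h1])
    fun x => by simpa using h2 x

lemma pd_of (M : Matrix n n ℝ) (h1 : Mᵀ = M) (h2 : ∀ x, x ≠ 0 → 0 < x ⬝ᵥ M *ᵥ x) :
    M.PosDef := by
  refine PosDef.of_dotProduct_mulVec_pos (by rw [Matrix.IsHermitian, ct_eq_t, h1])
    fun x hx => by simpa using h2 x hx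

lemma mul_diagonal_const (M : Matrix n n ℝ) (a : ℝ) :
    M * Matrix.diagonal (fun _ => a) = Matrix.diagonal (fun _ => a) * M := by
  ext i j
  rw [Matrix.mul_diagonal, Matrix.diagonal_mul]
  ring

lemma psd_quad {M : Matrix n n ℝ} (hM : M.PosSemidef) (x : n → ℝ) :
    0 ≤ x ⬝ᵥ M *ᵥ x := by simpa using hM.dotProduct_mulVec_nonneg x

lemma pd_quad {M : Matrix n n ℝ} (hM : M.PosDef) {x : n → ℝ} (hx : x ≠ 0) :
    0 < x ⬝ᵥ M *ᵥ x := by simpa using hM.dotProduct_mulVec_pos hx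

lemma mulVec_dot (A : Matrix n n ℝ) (u w : n → ℝ) :
    (A *ᵥ u) ⬝ᵥ w = u ⬝ᵥ (Aᵀ *ᵥ w) := by
  rw [Matrix.dotProduct_mulVec, Matrix.vecMul_transpose]

lemma commute_inv {A D : Matrix n n ℝ} (h : IsUnit A.det) (hc : D * A = A * D) :
    D * A⁻¹ = A⁻¹ * D := by
  have h1 : A * A⁻¹ = 1 := Matrix.mul_nonsing_inv A h
  have h2 : A⁻¹ * A = 1 := Matrix.nonsing_inv_mul A h
  calc D * A⁻¹ = A⁻¹ * A * (D * A⁻¹) := by rw [h2, one_mul]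
    _ = A⁻¹ * (A * D) * A⁻¹ := by simp only [mul_assoc]
    _ = A⁻¹ * (D * A) * A⁻¹ := by rw [hc]
    _ = A⁻¹ * D * (A * A⁻¹) := by simp only [mul_assoc]
    _ = A⁻¹ * D := by rw [h1, mul_one]

section
open scoped MatrixOrder
def msqrt (A : Matrix n n ℝ) : Matrix n n ℝ := CFC.sqrt A
lemma msqrt_psd (A : Matrix n n ℝ) : (msqrt A).PosSemidef := (CFC.sqrt_nonneg A).posSemidef
lemma msqrt_mul_self {A : Matrix n n ℝ} (hA : A.PosSemidef) : msqrt A * msqrt A = A :=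
  CFC.sqrt_mul_sqrt_self A hA.nonneg
end

lemma posDef_sqrt {A : Matrix n n ℝ} (hA : A.PosDef) :
    (msqrt A).PosDef := by
  set H := msqrt A with hH
  have hpsd : H.PosSemidef := msqrt_psd A
  refine PosDef.of_dotProduct_mulVec_pos hpsd.1 fun x hx => ?_
  have h0 : 0 ≤ star x ⬝ᵥ H *ᵥ x := hpsd.dotProduct_mulVec_nonneg x
  rcases h0.lt_or_eq with h | h
  · exact h
  · exfalso
    have hz : H *ᵥ x = 0 := (hpsd.dotProduct_mulVec_zero_iff x).mp h.symm
    have : A *ᵥ x = 0 := by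
      rw [← msqrt_mul_self hA.posSemidef, ← Matrix.mulVec_mulVec, hz, Matrix.mulVec_zero]
    have h2 := hA.dotProduct_mulVec_pos hx
    rw [this, dotProduct_zero] at h2
    exact lt_irrefl _ h2

lemma commute_sqrt {A D : Matrix n n ℝ} (hA : A.PosDef) (hD : Dᵀ = D)
    (hcomm : D * A = A * D) :
    D * msqrt A = msqrt A * D := by
  set H := msqrt A with hHdef
  have hHH : H * H = A := msqrt_mul_self hA.posSemidef
  have hHsym : Hᵀ = H := by
    rw [← ct_eq_t]; exact (msqrt_psd A).1
  have hHpd : H.PosDef := posDef_sqrt hA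
  set K := D * H - H * D with hK
  have hanti : H * K = -(K * H) := by
    have h1 : H * K + K * H = D * (H * H) - (H * H) * D := by
      rw [hK]; noncomm_ring
    rw [hHH, hcomm, sub_self] at h1
    exact eq_neg_of_add_eq_zero_left h1
  have hKt : Kᵀ = -K := by
    rw [hK, Matrix.transpose_sub, Matrix.transpose_mul, Matrix.transpose_mul, hHsym, hD]
    abel
  -- the trace of Kᵀ * (H * K)
  have hsum_nonneg : ∀ k, 0 ≤ (fun j => K j k) ⬝ᵥ (H *ᵥ fun j => K j k) :=
    fun k => psd_quad hHpd.posSemidef _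
  have htr1 : Matrix.trace (Kᵀ * (H * K)) = ∑ k, (fun j => K j k) ⬝ᵥ (H *ᵥ fun j => K j k) := by
    simp only [Matrix.trace, Matrix.diag, Matrix.mul_apply, Matrix.transpose_apply,
      dotProduct, Matrix.mulVec]
  have htr2 : Matrix.trace (Kᵀ * (H * K)) = -Matrix.trace (K * (H * Kᵀ)) := by
    rw [hanti]
    calc Matrix.trace (Kᵀ * -(K * H)) = -Matrix.trace (Kᵀ * (K * H)) := by
          rw [Matrix.mul_neg, Matrix.trace_neg]
      _ = -Matrix.trace ((K * H) * Kᵀ) := by rw [Matrix.trace_mul_comm]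
      _ = -Matrix.trace (K * (H * Kᵀ)) := by rw [mul_assoc]
  have htr3 : Matrix.trace (K * (H * Kᵀ)) = ∑ i, (fun j => K i j) ⬝ᵥ (H *ᵥ fun j => K i j) := by
    simp only [Matrix.trace, Matrix.diag, Matrix.mul_apply, Matrix.transpose_apply,
      dotProduct, Matrix.mulVec]
  have htr3_nonneg : 0 ≤ Matrix.trace (K * (H * Kᵀ)) := by
    rw [htr3]
    exact Finset.sum_nonneg fun i _ => psd_quad hHpd.posSemidef _
  have hzero : ∑ k, (fun j => K j k) ⬝ᵥ (H *ᵥ fun j => K j k) = 0 := by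
    have hle : Matrix.trace (Kᵀ * (H * K)) ≤ 0 := by
      rw [htr2]; linarith
    have hge : 0 ≤ Matrix.trace (Kᵀ * (H * K)) := by
      rw [htr1]; exact Finset.sum_nonneg fun k _ => hsum_nonneg k
    rw [← htr1]; exact le_antisymm hle hge
  have hcols : ∀ k, (fun j => K j k) = (0 : n → ℝ) := by
    intro k
    by_contra hne
    have h1 := pd_quad hHpd hne
    have h2 := (Finset.sum_eq_zero_iff_of_nonneg (fun k _ => hsum_nonneg k)).mp hzero k
      (Finset.mem_univ k)
    rw [h2] at h1
    exact lt_irrefl _ h1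
  have hKzero : K = 0 := by
    ext j k
    exact congrFun (hcols k) j
  exact sub_eq_zero.mp (hK ▸ hKzero)



lemma matOpNorm_nonneg {N : ℕ} (M : Matrix (Fin N) (Fin N) ℝ) : 0 ≤ matOpNorm M :=
  norm_nonneg _

lemma matOpNorm_neg {N : ℕ} (M : Matrix (Fin N) (Fin N) ℝ) : matOpNorm (-M) = matOpNorm M := by
  rw [matOpNorm, matOpNorm, map_neg, norm_neg]

end DKAux

noncomputable def enn {N : ℕ} (z : Fin N → ℝ) : ℝ :=
  ‖(WithLp.equiv 2 (Fin N → ℝ)).symm z‖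

namespace DKAux
open Matrix

lemma enn_nonneg {N : ℕ} (z : Fin N → ℝ) : 0 ≤ enn z := norm_nonneg _

lemma enn_sq {N : ℕ} (z : Fin N → ℝ) : enn z ^ 2 = z ⬝ᵥ z := by
  rw [enn, EuclideanSpace.norm_eq, Real.sq_sqrt (by positivity)]
  simp [dotProduct, Real.norm_eq_abs, sq_abs, sq]

lemma enn_add_le {N : ℕ} (a b : Fin N → ℝ) : enn (a + b) ≤ enn a + enn b := by
  rw [enn, enn, enn, WithLp.equiv_symm_apply, WithLp.toLp_add]
  exact norm_add_le _ _

lemma enn_op {N : ℕ} (M : Matrix (Fin N) (Fin N) ℝ) (y : Fin N → ℝ) :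
    enn (M *ᵥ y) ≤ matOpNorm M * enn y := by
  have h := (Matrix.toEuclideanCLM (𝕜 := ℝ) (n := Fin N) M).le_opNorm
    ((WithLp.equiv 2 (Fin N → ℝ)).symm y)
  rw [WithLp.equiv_symm_apply, Matrix.toEuclideanCLM_toLp] at h
  exact h

lemma enn_eq_of_dot {N : ℕ} (a b : Fin N → ℝ) (h : a ⬝ᵥ a = b ⬝ᵥ b) : enn a = enn b := by
  have h2 : enn a ^ 2 = enn b ^ 2 := by rw [enn_sq, enn_sq, h]
  nlinarith [enn_nonneg a, enn_nonneg b]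

lemma enn_le_of_dot {N : ℕ} (a b : Fin N → ℝ) (h : a ⬝ᵥ a ≤ b ⬝ᵥ b) : enn a ≤ enn b := by
  have h2 : enn a ^ 2 ≤ enn b ^ 2 := by rw [enn_sq, enn_sq]; exact h
  nlinarith [enn_nonneg a, enn_nonneg b]

end DKAux
open Matrix in
/-- Davis–Kahan-type stability of eigenbases under
perturbation. -/
theorem eigenbasis_perturbation
    (n : ℕ) (hn : 1 ≤ n) (G G' : Matrix (Fin n) (Fin n) ℝ)
    (hGsymm : G.IsSymm) (hG'symm : G'.IsSymm)
    (η : ℝ) (hη : 0 < η)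
    (hgap : ∀ lam lam' : ℝ,
      (∃ v : Fin n → ℝ, v ≠ 0 ∧ G.mulVec v = lam • v) →
      (∃ v : Fin n → ℝ, v ≠ 0 ∧ G.mulVec v = lam' • v) →
      lam ≠ lam' → η ≤ |lam - lam'|)
    (hclose : matOpNorm (G' - G) ≤ η / 2) :
    ∃ vb v : Fin n → (Fin n → ℝ), ∃ lb l : Fin n → ℝ,
      (∀ k m : Fin n, (∑ i, vb k i * vb m i) = if k = m then (1:ℝ) else 0) ∧
      (∀ k m : Fin n, (∑ i, v k i * v m i) = if k = m then (1:ℝ) else 0) ∧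
      (∀ k : Fin n, G.mulVec (vb k) = lb k • vb k) ∧
      (∀ k : Fin n, G'.mulVec (v k) = l k • v k) ∧
      (∀ k : Fin n, 1 - (2 * matOpNorm (G' - G) / η) ^ 2 ≤ ∑ i, vb k i * v k i) := by
  classical
  have hGH : G.IsHermitian := by rw [Matrix.IsHermitian, DKAux.ct_eq_t]; exact hGsymm
  have hG'H : G'.IsHermitian := by rw [Matrix.IsHermitian, DKAux.ct_eq_t]; exact hG'symm
  set ε : ℝ := matOpNorm (G' - G) with hεdef
  have hε0 : 0 ≤ ε := DKAux.matOpNorm_nonneg _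
  set μ : Fin n → ℝ := hGH.eigenvalues with hμdef
  set lam : Fin n → ℝ := hG'H.eigenvalues with hlamdef
  set S : Matrix (Fin n) (Fin n) ℝ := (hGH.eigenvectorUnitary : Matrix (Fin n) (Fin n) ℝ)
    with hSdef
  set T : Matrix (Fin n) (Fin n) ℝ := (hG'H.eigenvectorUnitary : Matrix (Fin n) (Fin n) ℝ)
    with hTdef
  have hSmem := hGH.eigenvectorUnitary.2
  have hTmem := hG'H.eigenvectorUnitary.2
  rw [Unitary.mem_iff] at hSmem hTmem
  have hstar : ∀ M : Matrix (Fin n) (Fin n) ℝ, star M = Mᵀ := fun M => by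
    rw [Matrix.star_eq_conjTranspose, DKAux.ct_eq_t]
  have hS1 : Sᵀ * S = 1 := by rw [← hstar S]; exact hSmem.1
  have hS2 : S * Sᵀ = 1 := by rw [← hstar S]; exact hSmem.2
  have hT1 : Tᵀ * T = 1 := by rw [← hstar T]; exact hTmem.1
  have hT2 : T * Tᵀ = 1 := by rw [← hstar T]; exact hTmem.2
  have hofReal : ∀ f : Fin n → ℝ,
      Matrix.diagonal ((RCLike.ofReal ∘ f) : Fin n → ℝ) = Matrix.diagonal f := by
    intro f; congr 1
  have hGspec : G = S * Matrix.diagonal μ * Sᵀ := by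
    have h := hGH.spectral_theorem
    rwa [Unitary.conjStarAlgAut_apply, hstar] at h
  have hG'spec : G' = T * Matrix.diagonal lam * Tᵀ := by
    have h := hG'H.spectral_theorem
    rwa [Unitary.conjStarAlgAut_apply, hstar] at h
  have hGS : G * S = S * Matrix.diagonal μ := by
    calc G * S = S * Matrix.diagonal μ * (Sᵀ * S) := by rw [hGspec]; noncomm_ring
      _ = S * Matrix.diagonal μ := by rw [hS1, mul_one]
  have hG'T : G' * T = T * Matrix.diagonal lam := by
    calc G' * T = T * Matrix.diagonal lam * (Tᵀ * T) := by rw [hG'spec]; noncomm_ring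
      _ = T * Matrix.diagonal lam := by rw [hT1, mul_one]
  -- the approximate eigenbasis (columns of T)
  set v : Fin n → Fin n → ℝ := fun k i => T i k with hvdef
  have hv_ortho : ∀ k m : Fin n, (∑ i, v k i * v m i) = if k = m then (1:ℝ) else 0 := by
    intro k m
    have h := congrFun (congrFun hT1 k) m
    simpa [Matrix.mul_apply, Matrix.transpose_apply, Matrix.one_apply, hvdef] using h
  have hv_eig : ∀ k : Fin n, G'.mulVec (v k) = lam k • v k := by
    intro k
    funext i
    have h := congrFun (congrFun hG'T i) k
    rw [Matrix.mul_diagonal] at h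
    simp only [Matrix.mul_apply] at h
    simpa [Matrix.mulVec, dotProduct, hvdef, mul_comm] using h
  -- eigenvector facts for the gap hypothesis
  have hw_eig : ∀ j : Fin n, G.mulVec (fun i => S i j) = μ j • (fun i => S i j) := by
    intro j
    funext i
    have h := congrFun (congrFun hGS i) j
    rw [Matrix.mul_diagonal] at h
    simp only [Matrix.mul_apply] at h
    simpa [Matrix.mulVec, dotProduct, mul_comm] using h
  have hw_unit : ∀ j : Fin n, (∑ i, S i j * S i j) = 1 := by
    intro j
    have h := congrFun (congrFun hS1 j) j
    simpa [Matrix.mul_apply, Matrix.transpose_apply, Matrix.one_apply] using h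
  have hw_ne : ∀ j : Fin n, (fun i => S i j) ≠ 0 := by
    intro j hzero
    have h := hw_unit j
    have hz : ∀ i, S i j = 0 := fun i => congrFun hzero i
    have h0 : (∑ i, S i j * S i j) = 0 := Finset.sum_eq_zero fun i _ => by rw [hz i]; ring
    rw [h0] at h
    norm_num at h
  have hgap' : ∀ j j' : Fin n, μ j ≠ μ j' → η ≤ |μ j - μ j'| := by
    intro j j' hne
    exact hgap (μ j) (μ j') ⟨fun i => S i j, hw_ne j, hw_eig j⟩
      ⟨fun i => S i j', hw_ne j', hw_eig j'⟩ hne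
  by_cases hsmall : η ≤ 2 * ε
  · -- trivial case: the bound is nonpositive
    have hb : 1 - (2 * ε / η) ^ 2 ≤ 0 := by
      have h1 : (1:ℝ) ≤ 2 * ε / η := (one_le_div hη).mpr hsmall
      nlinarith
    set s : Fin n → ℝ := fun k => if 0 ≤ ∑ i, S i k * T i k then 1 else -1 with hsdef
    have hs_sq : ∀ k, s k * s k = 1 := by
      intro k
      by_cases h : 0 ≤ ∑ i, S i k * T i k
      · simp [hsdef, if_pos h]
      · simp [hsdef, if_neg h]
    refine ⟨fun k i => s k * S i k, v, μ, lam, ?_, hv_ortho, ?_, hv_eig, ?_⟩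
    · intro k m
      have h := congrFun (congrFun hS1 k) m
      simp only [Matrix.mul_apply, Matrix.transpose_apply, Matrix.one_apply] at h
      have : (∑ i, (s k * S i k) * (s m * S i m)) = s k * s m * ∑ i, S i k * S i m := by
        rw [Finset.mul_sum]; apply Finset.sum_congr rfl; intros; ring
      rw [this, h]
      by_cases hkm : k = m
      · subst hkm; simp [hs_sq k]
      · simp [hkm]
    · intro k
      funext i
      have h := congrFun (hw_eig k) i
      simp only [Matrix.mulVec, dotProduct, Pi.smul_apply, smul_eq_mul] at h ⊢
      calc ∑ l, G i l * (s k * S l k) = s k * ∑ l, G i l * S l k := by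
            rw [Finset.mul_sum]; apply Finset.sum_congr rfl; intros; ring
        _ = s k * (μ k * S i k) := by rw [h]
        _ = μ k * (s k * S i k) := by ring
    · intro k
      have : (∑ i, (s k * S i k) * v k i) = s k * ∑ i, S i k * T i k := by
        rw [Finset.mul_sum]; apply Finset.sum_congr rfl; intros; simp [hvdef]; ring
      rw [this]
      have h2 : 0 ≤ s k * ∑ i, S i k * T i k := by
        by_cases h : 0 ≤ ∑ i, S i k * T i k
        · simp only [hsdef, if_pos h]; linarith
        · simp only [hsdef, if_neg h]; push_neg at h; nlinarith
      linarith
  · push_neg at hsmall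
    have hnonempty : Nonempty (Fin n) := ⟨⟨0, hn⟩⟩
    have hex : ∀ k : Fin n, ∃ j : Fin n, ∀ j' : Fin n, (μ j - lam k)^2 ≤ (μ j' - lam k)^2 := by
      intro k
      obtain ⟨j, _, hj⟩ := Finset.exists_min_image Finset.univ (fun j => (μ j - lam k)^2)
        ⟨Classical.arbitrary (Fin n), Finset.mem_univ _⟩
      exact ⟨j, fun j' => hj j' (Finset.mem_univ _)⟩
    choose jm hjm using hex
    set μb : Fin n → ℝ := fun k => μ (jm k) with hμbdef
    set C : Matrix (Fin n) (Fin n) ℝ := Sᵀ * T with hCdef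
    have hCtC : Cᵀ * C = 1 := by
      rw [hCdef, Matrix.transpose_mul, Matrix.transpose_transpose]
      calc Tᵀ * S * (Sᵀ * T) = Tᵀ * (S * Sᵀ) * T := by noncomm_ring
        _ = Tᵀ * T := by rw [hS2, mul_one]
        _ = 1 := hT1
    have hSG : Sᵀ * G = Matrix.diagonal μ * Sᵀ := by
      have h := congrArg Matrix.transpose hGS
      rw [Matrix.transpose_mul, Matrix.transpose_mul, Matrix.diagonal_transpose] at h
      rwa [hGsymm.eq] at h
    have hSGa : ∀ a : ℝ, Sᵀ * (G - Matrix.diagonal fun _ => a)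
        = Matrix.diagonal (fun j => μ j - a) * Sᵀ := by
      intro a
      rw [Matrix.mul_sub, hSG, DKAux.mul_diagonal_const, ← Matrix.sub_mul]
      congr 1
      rw [← Matrix.diagonal_sub]
    have hG'Ta : ∀ a : ℝ, (G' - Matrix.diagonal fun _ => a) * T
        = T * Matrix.diagonal (fun k => lam k - a) := by
      intro a
      rw [Matrix.sub_mul, hG'T, ← DKAux.mul_diagonal_const, ← Matrix.mul_sub]
      congr 1
      rw [← Matrix.diagonal_sub]
    have hGG'norm : matOpNorm (G - G') = ε := by
      rw [hεdef, ← DKAux.matOpNorm_neg (G' - G), neg_sub]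
    -- the key quadratic estimate
    have LQ : ∀ (x : Fin n → ℝ) (a r : ℝ), 0 ≤ r →
        (∀ k, x k ≠ 0 → (lam k - a)^2 ≤ r^2) →
        (∑ j, (μ j - a)^2 * ((C *ᵥ x) j)^2) ≤ (ε + r)^2 * (x ⬝ᵥ x) := by
      intro x a r hr hxr
      set y : Fin n → ℝ := T *ᵥ x with hydef
      set z : Fin n → ℝ := (G - Matrix.diagonal fun _ => a) *ᵥ y with hzdef
      have hCx : Sᵀ *ᵥ y = C *ᵥ x := by rw [hydef, Matrix.mulVec_mulVec, hCdef]
      have hWz : Sᵀ *ᵥ z = fun j => (μ j - a) * ((C *ᵥ x) j) := by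
        rw [hzdef, Matrix.mulVec_mulVec, hSGa a, ← Matrix.mulVec_mulVec, hCx]
        funext j
        rw [Matrix.mulVec_diagonal]
      have hsum_eq : (∑ j, (μ j - a)^2 * ((C *ᵥ x) j)^2) = z ⬝ᵥ z := by
        have h1 : (Sᵀ *ᵥ z) ⬝ᵥ (Sᵀ *ᵥ z) = z ⬝ᵥ z := by
          rw [DKAux.mulVec_dot, Matrix.mulVec_mulVec, Matrix.transpose_transpose, hS2,
            Matrix.one_mulVec]
        rw [← h1, hWz]
        simp only [dotProduct]
        apply Finset.sum_congr rfl
        intro j _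
        ring
      set u : Fin n → ℝ := fun k => (lam k - a) * x k with hudef
      have hzdec : z = (G - G') *ᵥ y + T *ᵥ u := by
        rw [hzdef]
        have hsplitM : (G - Matrix.diagonal fun _ => a)
            = (G - G') + (G' - Matrix.diagonal fun _ => a) := by abel
        rw [hsplitM, Matrix.add_mulVec]
        congr 1
        rw [hydef, Matrix.mulVec_mulVec, hG'Ta a, ← Matrix.mulVec_mulVec]
        have hdu : (Matrix.diagonal fun k => lam k - a) *ᵥ x = u := by
          funext k
          rw [Matrix.mulVec_diagonal, hudef]
        rw [hdu]
      have hy_en : enn y = enn x := by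
        apply DKAux.enn_eq_of_dot
        rw [hydef, DKAux.mulVec_dot, Matrix.mulVec_mulVec, hT1, Matrix.one_mulVec]
      have hu_en : enn u ≤ r * enn x := by
        have h1 : u ⬝ᵥ u ≤ (r * enn x)^2 := by
          rw [mul_pow, DKAux.enn_sq]
          rw [hudef]
          simp only [dotProduct]
          rw [Finset.mul_sum]
          apply Finset.sum_le_sum
          intro k _
          by_cases hxk : x k = 0
          · simp [hxk]
          · have := hxr k hxk
            nlinarith [sq_nonneg (x k)]
        have h2 : enn u ^ 2 ≤ (r * enn x)^2 := by rw [DKAux.enn_sq]; exact h1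
        have h3 : 0 ≤ r * enn x := mul_nonneg hr (DKAux.enn_nonneg x)
        nlinarith [DKAux.enn_nonneg u]
      have hGy_en : enn ((G - G') *ᵥ y) ≤ ε * enn x := by
        calc enn ((G - G') *ᵥ y) ≤ matOpNorm (G - G') * enn y := DKAux.enn_op _ _
          _ = ε * enn x := by rw [hGG'norm, hy_en]
      have hTu_en : enn (T *ᵥ u) = enn u := by
        apply DKAux.enn_eq_of_dot
        rw [DKAux.mulVec_dot, Matrix.mulVec_mulVec, hT1, Matrix.one_mulVec]
      have hz_en : enn z ≤ (ε + r) * enn x := by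
        calc enn z ≤ enn ((G - G') *ᵥ y) + enn (T *ᵥ u) := by
              rw [hzdec]; exact DKAux.enn_add_le _ _
          _ ≤ ε * enn x + r * enn x := by rw [hTu_en]; exact add_le_add hGy_en hu_en
          _ = (ε + r) * enn x := by ring
      have hfin : z ⬝ᵥ z ≤ (ε + r)^2 * (x ⬝ᵥ x) := by
        rw [← DKAux.enn_sq z, ← DKAux.enn_sq x]
        nlinarith [DKAux.enn_nonneg z, DKAux.enn_nonneg x,
          mul_nonneg (add_nonneg hε0 hr) (DKAux.enn_nonneg x)]
      rw [hsum_eq]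
      exact hfin
    -- the chosen eigenvalue is close
    have hμbε : ∀ k, (μb k - lam k)^2 ≤ ε^2 := by
      intro k
      have hLQ := LQ (Pi.single k 1) (lam k) 0 le_rfl (fun m hm => by
        rcases eq_or_ne m k with rfl | hne
        · simp
        · exact absurd (Pi.single_eq_of_ne hne 1) hm)
      have hcol : C *ᵥ Pi.single k 1 = fun j => C j k := by
        funext j; simp [Matrix.mulVec_single]
      have hdot : (Pi.single k 1 : Fin n → ℝ) ⬝ᵥ (Pi.single k 1) = 1 := by
        rw [dotProduct_single]; simp
      rw [hcol, hdot] at hLQ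
      have hcolsum : (∑ j, (C j k)^2) = 1 := by
        have h := congrFun (congrFun hCtC k) k
        simp only [Matrix.mul_apply, Matrix.transpose_apply, Matrix.one_apply_eq] at h
        rw [← h]
        apply Finset.sum_congr rfl
        intro j _
        ring
      calc (μb k - lam k)^2 = ∑ j, (μb k - lam k)^2 * (C j k)^2 := by
            rw [← Finset.mul_sum, hcolsum, mul_one]
        _ ≤ ∑ j, (μ j - lam k)^2 * (C j k)^2 :=
            Finset.sum_le_sum fun j _ =>
              mul_le_mul_of_nonneg_right (hjm k j) (sq_nonneg _)
        _ ≤ (ε + 0)^2 * 1 := hLQ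
        _ = ε^2 := by ring
    -- block-truncated matrix and error matrix
    set B : Matrix (Fin n) (Fin n) ℝ :=
      Matrix.of (fun j k => if μ j = μb k then C j k else 0) with hBdef
    set Amat : Matrix (Fin n) (Fin n) ℝ := Bᵀ * B with hAdef
    set E : Matrix (Fin n) (Fin n) ℝ := 1 - Amat with hEdef
    set δ : ℝ := 2 * ε / η with hδdef
    have hδ0 : 0 ≤ δ := by rw [hδdef]; positivity
    have hδ1 : δ < 1 := by rw [hδdef, div_lt_one hη]; linarith
    have hgapsq : ∀ (j k : Fin n), μ j ≠ μb k → η^2 ≤ (μ j - μb k)^2 := by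
      intro j k hne
      have h : η ≤ |μ j - μb k| := hgap' j (jm k) hne
      nlinarith [sq_abs (μ j - μb k), abs_nonneg (μ j - μb k)]
    -- per-fiber quadratic bound
    have FIB : ∀ (k0 : Fin n) (x : Fin n → ℝ), (∀ k, x k ≠ 0 → μb k = μb k0) →
        0 ≤ x ⬝ᵥ (E *ᵥ x) ∧ x ⬝ᵥ (E *ᵥ x) ≤ δ^2 * (x ⬝ᵥ x) := by
      intro k0 x hx
      set a : ℝ := μb k0 with hadef
      have hBx : B *ᵥ x = fun j => if μ j = a then (C *ᵥ x) j else 0 := by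
        funext j
        simp only [Matrix.mulVec, dotProduct, hBdef, Matrix.of_apply]
        by_cases hja : μ j = a
        · rw [if_pos hja]
          apply Finset.sum_congr rfl
          intro k _
          by_cases hxk : x k = 0
          · simp [hxk]
          · rw [if_pos (by rw [hja, hx k hxk])]
        · rw [if_neg hja]
          apply Finset.sum_eq_zero
          intro k _
          by_cases hxk : x k = 0
          · simp [hxk]
          · rw [if_neg (fun h => hja (by rw [h, hx k hxk])), zero_mul]
      have hq : x ⬝ᵥ (E *ᵥ x) = ∑ j, (if μ j = a then 0 else ((C *ᵥ x) j)^2) := by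
        have h1 : x ⬝ᵥ (E *ᵥ x) = x ⬝ᵥ x - (B *ᵥ x) ⬝ᵥ (B *ᵥ x) := by
          rw [hEdef, Matrix.sub_mulVec, Matrix.one_mulVec, dotProduct_sub]
          congr 1
          rw [hAdef, ← Matrix.mulVec_mulVec, ← DKAux.mulVec_dot]
        have h2 : x ⬝ᵥ x = (C *ᵥ x) ⬝ᵥ (C *ᵥ x) := by
          rw [DKAux.mulVec_dot, Matrix.mulVec_mulVec, hCtC, Matrix.one_mulVec]
        rw [h1, h2, hBx]
        simp only [dotProduct]
        rw [← Finset.sum_sub_distrib]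
        apply Finset.sum_congr rfl
        intro j _
        by_cases hja : μ j = a
        · rw [if_pos hja, if_pos hja]; ring
        · rw [if_neg hja, if_neg hja]; ring
      constructor
      · rw [hq]
        apply Finset.sum_nonneg
        intro j _
        by_cases hja : μ j = a
        · rw [if_pos hja]
        · rw [if_neg hja]; positivity
      · have hLQa := LQ x a ε hε0 (fun k hxk => by
          have h1 := hμbε k
          have h2 : μb k = a := hx k hxk
          nlinarith [h1, h2 ▸ h1])
        have hkey : η^2 * (x ⬝ᵥ (E *ᵥ x)) ≤ (ε + ε)^2 * (x ⬝ᵥ x) := by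
          calc η^2 * (x ⬝ᵥ (E *ᵥ x))
              = ∑ j, η^2 * (if μ j = a then 0 else ((C *ᵥ x) j)^2) := by
                rw [hq, Finset.mul_sum]
            _ ≤ ∑ j, (μ j - a)^2 * ((C *ᵥ x) j)^2 := by
                apply Finset.sum_le_sum
                intro j _
                by_cases hja : μ j = a
                · rw [if_pos hja, mul_zero]; positivity
                · rw [if_neg hja]
                  exact mul_le_mul_of_nonneg_right (hgapsq j k0 hja) (sq_nonneg _)
            _ ≤ (ε + ε)^2 * (x ⬝ᵥ x) := hLQa
        have hxx : 0 ≤ x ⬝ᵥ x := Finset.sum_nonneg fun i _ => mul_self_nonneg _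
        have hη2 : (0:ℝ) < η^2 := by positivity
        rw [hδdef, div_pow, div_mul_eq_mul_div, le_div_iff₀ hη2]
        nlinarith [hkey]
    -- global bound for E
    have hEblock : ∀ k m, μb k ≠ μb m → E k m = 0 := by
      intro k m hne
      have hkm : k ≠ m := fun h => hne (by rw [h])
      rw [hEdef, Matrix.sub_apply, Matrix.one_apply_ne hkm, hAdef]
      have hz : (∑ j, Bᵀ k j * B j m) = 0 := Finset.sum_eq_zero (fun j _ => by
        simp only [Matrix.transpose_apply, hBdef, Matrix.of_apply]
        by_cases h2 : μ j = μb m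
        · have h3 : ¬ μ j = μb k := fun h1 => hne (by rw [← h1, h2])
          rw [if_neg h3, zero_mul]
        · rw [if_neg h2, mul_zero])
      rw [Matrix.mul_apply, hz, sub_zero]
    have hEg : ∀ x : Fin n → ℝ, 0 ≤ x ⬝ᵥ (E *ᵥ x) ∧ x ⬝ᵥ (E *ᵥ x) ≤ δ^2 * (x ⬝ᵥ x) := by
      intro x
      set Avals : Finset ℝ := Finset.image μb Finset.univ with hAvals
      set xa : ℝ → (Fin n → ℝ) := fun a k => if μb k = a then x k else 0 with hxadef
      have hmem : ∀ k : Fin n, μb k ∈ Avals :=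
        fun k => Finset.mem_image_of_mem μb (Finset.mem_univ k)
      have hdecomp : ∑ a ∈ Avals, (xa a) ⬝ᵥ (E *ᵥ (xa a)) = x ⬝ᵥ (E *ᵥ x) := by
        simp only [dotProduct, Matrix.mulVec, hxadef]
        rw [Finset.sum_comm]
        apply Finset.sum_congr rfl
        intro k _
        rw [Finset.sum_eq_single (μb k)]
        · rw [if_pos rfl]
          congr 1
          apply Finset.sum_congr rfl
          intro m _
          by_cases hkm : μb m = μb k
          · rw [if_pos hkm]
          · rw [if_neg hkm, hEblock k m (fun h => hkm h.symm)]; ring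
        · intro b _ hbne
          rw [if_neg (fun h => hbne h.symm), zero_mul]
        · intro hnot
          exact absurd (hmem k) hnot
      have hxsum : ∑ a ∈ Avals, (xa a) ⬝ᵥ (xa a) = x ⬝ᵥ x := by
        simp only [dotProduct, hxadef]
        rw [Finset.sum_comm]
        apply Finset.sum_congr rfl
        intro k _
        rw [Finset.sum_eq_single (μb k)]
        · rw [if_pos rfl]
        · intro b _ hbne
          rw [if_neg (fun h => hbne h.symm), zero_mul]
        · intro hnot
          exact absurd (hmem k) hnot
      have hterm : ∀ a ∈ Avals, 0 ≤ (xa a) ⬝ᵥ (E *ᵥ (xa a)) ∧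
          (xa a) ⬝ᵥ (E *ᵥ (xa a)) ≤ δ^2 * ((xa a) ⬝ᵥ (xa a)) := by
        intro a ha
        obtain ⟨k0, _, hk0⟩ := Finset.mem_image.mp ha
        apply FIB k0
        intro k hk
        have h1 : μb k = a := by
          by_contra hcon
          exact hk (by simp only [hxadef, if_neg hcon])
        rw [h1, ← hk0]
      constructor
      · rw [← hdecomp]
        exact Finset.sum_nonneg fun a ha => (hterm a ha).1
      · rw [← hdecomp, ← hxsum, Finset.mul_sum]
        exact Finset.sum_le_sum fun a ha => (hterm a ha).2
    -- Amat is positive definite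
    have hAsym : Amatᵀ = Amat := by
      rw [hAdef, Matrix.transpose_mul, Matrix.transpose_transpose]
    have hAquad : ∀ x : Fin n → ℝ, x ⬝ᵥ (Amat *ᵥ x) = x ⬝ᵥ x - x ⬝ᵥ (E *ᵥ x) := by
      intro x
      rw [hEdef, Matrix.sub_mulVec, Matrix.one_mulVec, dotProduct_sub]
      ring
    have hxx_pos : ∀ x : Fin n → ℝ, x ≠ 0 → 0 < x ⬝ᵥ x := by
      intro x hx
      have h1 : 0 ≤ x ⬝ᵥ x := Finset.sum_nonneg fun i _ => mul_self_nonneg _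
      rcases h1.lt_or_eq with h | h
      · exact h
      · exact absurd (dotProduct_self_eq_zero.mp h.symm) hx
    have hApd : Amat.PosDef := by
      apply DKAux.pd_of _ hAsym
      intro x hx
      have h1 := (hEg x).2
      have h2 := hxx_pos x hx
      rw [hAquad]
      nlinarith [h1, h2, mul_lt_mul_of_pos_right (show δ^2 < 1 by nlinarith [hδ0, hδ1]) h2]
    -- square root machinery
    set H : Matrix (Fin n) (Fin n) ℝ := DKAux.msqrt Amat with hHdef
    have hHpsd : H.PosSemidef := DKAux.msqrt_psd Amat
    have hHsym : Hᵀ = H := by rw [← DKAux.ct_eq_t]; exact hHpsd.1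
    have hHH : H * H = Amat := DKAux.msqrt_mul_self hApd.posSemidef
    have hdet : IsUnit Amat.det := isUnit_iff_ne_zero.mpr (ne_of_gt hApd.det_pos)
    have hAinv1 : Amat * Amat⁻¹ = 1 := Matrix.mul_nonsing_inv _ hdet
    have hAinv2 : Amat⁻¹ * Amat = 1 := Matrix.nonsing_inv_mul _ hdet
    have hAinvsym : Amat⁻¹ᵀ = Amat⁻¹ := by
      rw [Matrix.transpose_nonsing_inv, hAsym]
    have hHA : H * Amat = Amat * H := by rw [← hHH]; noncomm_ring
    have hHAinv : H * Amat⁻¹ = Amat⁻¹ * H := DKAux.commute_inv hdet hHA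
    set Hinv : Matrix (Fin n) (Fin n) ℝ := H * Amat⁻¹ with hHinvdef
    have hHinvH : Hinv * H = 1 := by
      rw [hHinvdef, mul_assoc, ← hHAinv, ← mul_assoc, hHH, hAinv1]
    have hHHinv : H * Hinv = 1 := by
      rw [hHinvdef, ← mul_assoc, hHH, hAinv1]
    have hHinvsym : Hinvᵀ = Hinv := by
      rw [hHinvdef, Matrix.transpose_mul, hAinvsym, hHsym, ← hHAinv]
    set U : Matrix (Fin n) (Fin n) ℝ := B * Hinv with hUdef
    have hUtU : Uᵀ * U = 1 := by
      rw [hUdef, Matrix.transpose_mul, hHinvsym]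
      calc Hinv * Bᵀ * (B * Hinv) = Hinv * (Bᵀ * B) * Hinv := by noncomm_ring
        _ = Hinv * (H * H) * Hinv := by rw [← hAdef, ← hHH]
        _ = (Hinv * H) * (H * Hinv) := by noncomm_ring
        _ = 1 := by rw [hHinvH, hHHinv, mul_one]
    -- diagonal of eigenvalue labels commutes with everything
    set Dμb : Matrix (Fin n) (Fin n) ℝ := Matrix.diagonal μb with hDdef
    have hDsym : Dμbᵀ = Dμb := by rw [hDdef, Matrix.diagonal_transpose]
    have hABlock : ∀ k m, μb k ≠ μb m → Amat k m = 0 := by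
      intro k m hne
      have h := hEblock k m hne
      have hkm : k ≠ m := fun hh => hne (by rw [hh])
      rw [hEdef, Matrix.sub_apply, Matrix.one_apply_ne hkm] at h
      linarith
    have hDA : Dμb * Amat = Amat * Dμb := by
      ext k m
      rw [hDdef, Matrix.diagonal_mul, Matrix.mul_diagonal]
      by_cases h : μb k = μb m
      · rw [h]; ring
      · rw [hABlock k m h]; ring
    have hDH : Dμb * H = H * Dμb := DKAux.commute_sqrt hApd hDsym hDA
    have hDAinv : Dμb * Amat⁻¹ = Amat⁻¹ * Dμb := DKAux.commute_inv hdet hDA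
    have hDHinv : Dμb * Hinv = Hinv * Dμb := by
      rw [hHinvdef, ← mul_assoc, hDH, mul_assoc, hDAinv, ← mul_assoc]
    have hΛB : Matrix.diagonal μ * B = B * Dμb := by
      ext j k
      rw [Matrix.diagonal_mul, hDdef, Matrix.mul_diagonal]
      simp only [hBdef, Matrix.of_apply]
      by_cases h : μ j = μb k
      · rw [if_pos h, h]; ring
      · rw [if_neg h]; ring
    have hΛU : Matrix.diagonal μ * U = U * Dμb := by
      rw [hUdef, ← mul_assoc, hΛB, mul_assoc, hDHinv, ← mul_assoc]
    have hUblock : ∀ j k, μ j ≠ μb k → U j k = 0 := by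
      intro j k hne
      have h := congrFun (congrFun hΛU j) k
      rw [Matrix.diagonal_mul] at h
      rw [hDdef, Matrix.mul_diagonal] at h
      by_contra hU0
      apply hne
      have h2 : (μ j - μb k) * U j k = 0 := by linarith [h]
      rcases mul_eq_zero.mp h2 with h3 | h3
      · linarith
      · exact absurd h3 hU0
    -- the exact eigenbasis
    set P : Matrix (Fin n) (Fin n) ℝ := S * U with hPdef
    have hPtP : Pᵀ * P = 1 := by
      rw [hPdef, Matrix.transpose_mul]
      calc Uᵀ * Sᵀ * (S * U) = Uᵀ * (Sᵀ * S) * U := by noncomm_ring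
        _ = Uᵀ * U := by rw [hS1, mul_one]
        _ = 1 := hUtU
    have hGP : G * P = P * Dμb := by
      rw [hPdef, ← mul_assoc, hGS, mul_assoc, hΛU, ← mul_assoc]
    refine ⟨fun k i => P i k, v, μb, lam, ?_, hv_ortho, ?_, hv_eig, ?_⟩
    · intro k m
      have h := congrFun (congrFun hPtP k) m
      simp only [Matrix.mul_apply, Matrix.transpose_apply, Matrix.one_apply] at h
      simpa using h
    · intro k
      funext i
      have h := congrFun (congrFun hGP i) k
      rw [hDdef, Matrix.mul_diagonal] at h
      simp only [Matrix.mul_apply] at h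
      simpa [Matrix.mulVec, dotProduct, mul_comm] using h
    · intro k
      have hPV : (∑ i, P i k * v k i) = (Uᵀ * C) k k := by
        rw [hCdef, hPdef]
        simp only [Matrix.mul_apply, Matrix.transpose_apply, hvdef]
        simp_rw [Finset.sum_mul, Finset.mul_sum]
        rw [Finset.sum_comm]
        apply Finset.sum_congr rfl
        intro j _
        apply Finset.sum_congr rfl
        intro i _
        ring
      have hUCsplit : Uᵀ * C = Uᵀ * B + Uᵀ * (C - B) := by
        rw [← Matrix.mul_add, add_sub_cancel]
      have hUtB : Uᵀ * B = H := by
        rw [hUdef, Matrix.transpose_mul, hHinvsym]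
        calc Hinv * Bᵀ * B = Hinv * (Bᵀ * B) := by rw [mul_assoc]
          _ = Hinv * (H * H) := by rw [← hAdef, ← hHH]
          _ = (Hinv * H) * H := by rw [← mul_assoc]
          _ = H := by rw [hHinvH, one_mul]
      have hoff : (Uᵀ * (C - B)) k k = 0 := by
        simp only [Matrix.mul_apply, Matrix.transpose_apply, Matrix.sub_apply]
        apply Finset.sum_eq_zero
        intro j _
        by_cases h : μ j = μb k
        · have hz : C j k - B j k = 0 := by
            simp only [hBdef, Matrix.of_apply, if_pos h, sub_self]
          rw [hz, mul_zero]
        · rw [hUblock j k h, zero_mul]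
      -- diagonal entries
      have hdiagE : (Pi.single k 1 : Fin n → ℝ) ⬝ᵥ (E *ᵥ Pi.single k 1) = E k k := by
        rw [Matrix.mulVec_single]
        simp [single_dotProduct]
      have hdiag1 : (Pi.single k 1 : Fin n → ℝ) ⬝ᵥ (Pi.single k 1 : Fin n → ℝ) = 1 := by
        rw [dotProduct_single]; simp
      have hEkk : E k k ≤ δ^2 := by
        have hFk := (FIB k (Pi.single k 1) (fun m hm => by
          rcases eq_or_ne m k with rfl | hne
          · rfl
          · exact absurd (Pi.single_eq_of_ne hne 1) hm)).2
        rw [hdiagE, hdiag1, mul_one] at hFk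
        exact hFk
      have hAkk : 1 - δ^2 ≤ Amat k k := by
        have h3 : E k k = 1 - Amat k k := by
          rw [hEdef, Matrix.sub_apply, Matrix.one_apply_eq]
        linarith
      -- H dominates H * H on the diagonal
      have hpsd2 : (H - H * H).PosSemidef := by
        set Q : Matrix (Fin n) (Fin n) ℝ := DKAux.msqrt H with hQdef
        have hQQ : Q * Q = H := DKAux.msqrt_mul_self hHpsd
        have hQherm : Qᴴ = Q := (DKAux.msqrt_psd H).1
        have h1H : (1 - H).PosSemidef := by
          apply DKAux.psd_of
          · rw [Matrix.transpose_sub, Matrix.transpose_one, hHsym]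
          · intro x
            have hCS := Finset.sum_mul_sq_le_sq_mul_sq Finset.univ x (H *ᵥ x)
            have hH2 : (H *ᵥ x) ⬝ᵥ (H *ᵥ x) = x ⬝ᵥ (Amat *ᵥ x) := by
              rw [DKAux.mulVec_dot, hHsym, Matrix.mulVec_mulVec, hHH]
            have hE := (hEg x).1
            have hAq := hAquad x
            have hxnn : 0 ≤ x ⬝ᵥ x := Finset.sum_nonneg fun i _ => mul_self_nonneg _
            have hHnn : 0 ≤ x ⬝ᵥ (H *ᵥ x) := DKAux.psd_quad hHpsd x
            rw [Matrix.sub_mulVec, Matrix.one_mulVec, dotProduct_sub]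
            have hdot_eq : (∑ i, x i * (H *ᵥ x) i) = x ⬝ᵥ (H *ᵥ x) := rfl
            have hsq1 : (∑ i, x i ^ 2) = x ⬝ᵥ x := by
              simp only [dotProduct]; apply Finset.sum_congr rfl; intros; ring
            have hsq2 : (∑ i, (H *ᵥ x) i ^ 2) = (H *ᵥ x) ⬝ᵥ (H *ᵥ x) := by
              simp only [dotProduct]; apply Finset.sum_congr rfl; intros; ring
            rw [hdot_eq, hsq1, hsq2, hH2, hAq] at hCS
            nlinarith [hCS, hE, hxnn, hHnn]
        have hQH : Q * H = H * Q := by rw [← hQQ]; noncomm_ring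
        have heq : Q * (1 - H) * Q = H - H * H := by
          calc Q * (1 - H) * Q = Q * Q - Q * H * Q := by noncomm_ring
            _ = H - H * H := by rw [hQQ, hQH, mul_assoc, hQQ]
        have hps := h1H.conjTranspose_mul_mul_same Q
        rw [hQherm, heq] at hps
        exact hps
      have hHkk : Amat k k ≤ H k k := by
        have h := DKAux.psd_quad hpsd2 (Pi.single k 1)
        have hd : (Pi.single k 1 : Fin n → ℝ) ⬝ᵥ ((H - H * H) *ᵥ Pi.single k 1)
            = H k k - (H * H) k k := by
          rw [Matrix.mulVec_single]
          simp [single_dotProduct, Matrix.sub_apply]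
        rw [hd, hHH] at h
        linarith
      rw [hPV, hUCsplit, Matrix.add_apply, hUtB, hoff, add_zero]
      calc 1 - (2 * ε / η)^2 = 1 - δ^2 := by rw [hδdef]
        _ ≤ Amat k k := hAkk
        _ ≤ H k k := hHkk
end
end
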